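/- In synchronous majority dynamics on a locally finite graph with odd degrees admitting a summable d-legal edge weighting, the Lyapunov functional L_t = (1/4) ∑_{(i,j)∈E} z(i,j)(A^i_{t+1} − A^j_t)^2 is monotone non-increasing in t. -/

import Mathlib

open Finset
lemma sign_lemma {V : Type*} (G : SimpleGraph V) [∀ v : V, Fintype (G.neighborSet v)]
    (d : ℕ) (hd : 3 ≤ d) (hdeg : ∀ i, G.degree i ≤ d)
    (z : V → V → ℝ)
    (hz01 : ∀ i j, G.Adj i j → 0 < z i j ∧ z i j ≤ 1)
    (hlegal : ∀ i j k, G.Adj i j → G.Adj i k →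
      z i j / z i k < ((d : ℝ) + 1) / ((d : ℝ) - 1))
    (i : V) (B : V → ℤ) (hB : ∀ j, B j = 1 ∨ B j = -1)
    (hS : 0 < ∑ j ∈ G.neighborFinset i, B j) :
    0 < ∑ j ∈ G.neighborFinset i, z i j * (B j : ℝ) := by
  classical
  set N := G.neighborFinset i with hN
  have hadj : ∀ j ∈ N, G.Adj i j := fun j hj => by
    rwa [hN, SimpleGraph.mem_neighborFinset] at hj
  set P := N.filter (fun j => B j = 1) with hP
  set M := N.filter (fun j => ¬ B j = 1) with hM
  have hPB : ∀ j ∈ P, B j = 1 := fun j hj => (Finset.mem_filter.mp hj).2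
  have hMB : ∀ j ∈ M, B j = -1 := fun j hj => by
    rcases hB j with h | h
    · exact absurd h (Finset.mem_filter.mp hj).2
    · exact h
  have hcard : P.card + M.card = N.card :=
    Finset.card_filter_add_card_filter_not _
  have hdc : N.card = G.degree i := by rw [hN]; rfl
  have hSsplit : (∑ j ∈ N, B j) = (P.card : ℤ) - M.card := by
    rw [← Finset.sum_filter_add_sum_filter_not N (fun j => B j = 1)]
    rw [Finset.sum_congr rfl hPB, Finset.sum_congr rfl hMB]
    simp only [Finset.sum_const, nsmul_eq_mul, mul_one, mul_neg]
    push_cast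
    ring
  have hpm : M.card < P.card := by
    rw [hSsplit] at hS
    exact_mod_cast sub_pos.mp hS
  have hWsplit : (∑ j ∈ N, z i j * (B j : ℝ))
      = (∑ j ∈ P, z i j) - ∑ j ∈ M, z i j := by
    rw [← Finset.sum_filter_add_sum_filter_not N (fun j => B j = 1) (fun j => z i j * (B j : ℝ))]
    have h1 : (∑ j ∈ P, z i j * (B j : ℝ)) = ∑ j ∈ P, z i j :=
      Finset.sum_congr rfl (fun j hj => by rw [hPB j hj]; simp)
    have h2 : (∑ j ∈ M, z i j * (B j : ℝ)) = ∑ j ∈ M, -(z i j) :=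
      Finset.sum_congr rfl (fun j hj => by rw [hMB j hj]; simp)
    rw [h1, h2, Finset.sum_neg_distrib]
    ring
  rw [hWsplit]
  have hPne : P.Nonempty :=
    Finset.card_pos.mp (lt_of_le_of_lt (Nat.zero_le _) hpm)
  rcases Finset.eq_empty_or_nonempty M with hMe | hMne
  · rw [hMe]
    simp only [Finset.sum_empty, sub_zero]
    exact Finset.sum_pos (fun j hj => (hz01 i j (hadj j (Finset.filter_subset _ _ hj))).1) hPne
  · -- get the minimum weight neighbor
    have hNne : N.Nonempty := hMne.mono (Finset.filter_subset _ _)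
    obtain ⟨j0, hj0N, hj0min⟩ := N.exists_min_image (fun j => z i j) hNne
    have hz0 : 0 < z i j0 := (hz01 i j0 (hadj j0 hj0N)).1
    have hd1 : (0:ℝ) < (d:ℝ) - 1 := by
      have : (3:ℝ) ≤ d := by exact_mod_cast hd
      linarith
    set r : ℝ := ((d:ℝ) + 1) / ((d:ℝ) - 1) with hr
    have hMlt : (∑ j ∈ M, z i j) < M.card * (z i j0 * r) := by
      have := Finset.sum_lt_sum_of_nonempty hMne
        (f := fun j => z i j) (g := fun _ => z i j0 * r) ?_
      · simpa [Finset.sum_const, nsmul_eq_mul] using this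
      · intro j hj
        have hj' : G.Adj i j := hadj j (Finset.filter_subset _ _ hj)
        have := hlegal i j j0 hj' (hadj j0 hj0N)
        rw [div_lt_iff₀ hz0] at this
        calc z i j < r * z i j0 := this
        _ = z i j0 * r := by ring
    have hPge : (P.card : ℝ) * z i j0 ≤ ∑ j ∈ P, z i j := by
      have := Finset.card_nsmul_le_sum P (fun j => z i j) (z i j0)
        (fun j hj => hj0min j (Finset.filter_subset _ _ hj))
      simpa [nsmul_eq_mul] using this
    have hdegd : P.card + M.card ≤ d := by
      rw [hcard, hdc]; exact hdeg i
    have hkey : (M.card : ℝ) * (z i j0 * r) ≤ (P.card : ℝ) * z i j0 := by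
      have hp : ((M.card : ℝ) + 1) ≤ P.card := by exact_mod_cast hpm
      have hpd : (P.card : ℝ) + M.card ≤ d := by exact_mod_cast hdegd
      have h1 : (M.card : ℝ) * ((d:ℝ) + 1) ≤ (P.card : ℝ) * ((d:ℝ) - 1) := by
        nlinarith
      have h2 : (M.card : ℝ) * r ≤ P.card := by
        rw [hr, mul_div_assoc']
        rw [div_le_iff₀ hd1]
        linarith [h1]
      nlinarith
    linarith

lemma pm_sq {x : ℤ} (hx : x = 1 ∨ x = -1) : ((x:ℝ))^2 = 1 := by
  rcases hx with h | h <;> simp [h]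

/-- With a summable `d`-legal edge weighting, the Lyapunov functional
`L_t = (1/4) ∑_{(i,j)∈E} z(i,j)(A^i_{t+1} - A^j_t)^2` (sum over ordered adjacent pairs)
is monotone non-increasing in `t`. -/
theorem stmt_3 {V : Type*} (G : SimpleGraph V) [∀ v : V, Fintype (G.neighborSet v)]
    (d : ℕ) (hd : 3 ≤ d)
    (hodd : ∀ i, Odd (G.degree i)) (hdeg : ∀ i, G.degree i ≤ d)
    (z : V → V → ℝ) (hsym : ∀ i j, z i j = z j i)
    (hz01 : ∀ i j, G.Adj i j → 0 < z i j ∧ z i j ≤ 1)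
    (hlegal : ∀ i j k, G.Adj i j → G.Adj i k →
      z i j / z i k < ((d : ℝ) + 1) / ((d : ℝ) - 1))
    (hzsum : Summable (fun p : {p : V × V // G.Adj p.1 p.2} => z p.1.1 p.1.2))
    (A : ℕ → V → ℤ) (hA0 : ∀ i, A 0 i = 1 ∨ A 0 i = -1)
    (hdyn : ∀ t i, A (t + 1) i =
      if 0 < ∑ j ∈ G.neighborFinset i, A t j then 1 else -1) :
    Antitone (fun t : ℕ => (1 / 4 : ℝ) * ∑' p : {p : V × V // G.Adj p.1 p.2},
      z p.1.1 p.1.2 * ((A (t + 1) p.1.1 : ℝ) - (A t p.1.2 : ℝ)) ^ 2) := by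
  classical
  -- all opinions are ±1
  have hApm : ∀ t i, A t i = 1 ∨ A t i = -1 := by
    intro t i
    cases t with
    | zero => exact hA0 i
    | succ t => rw [hdyn]; split <;> simp
  -- the neighborhood sum is never zero
  have hSne : ∀ t i, (∑ j ∈ G.neighborFinset i, A t j) ≠ 0 := by
    intro t i h
    have hmod : (∑ j ∈ G.neighborFinset i, A t j) % 2 = 1 := by
      rw [Finset.sum_int_mod]
      have h1 : ∀ j ∈ G.neighborFinset i, A t j % 2 = 1 := by
        intro j _
        rcases hApm t j with h | h <;> simp [h]
      rw [Finset.sum_congr rfl h1, Finset.sum_const, nsmul_eq_mul, mul_one]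
      have : Odd ((G.neighborFinset i).card : ℤ) := by
        exact_mod_cast hodd i
      rw [Int.odd_iff] at this
      omega
    rw [h] at hmod
    simp at hmod
  -- positivity of z on pairs
  have hzadj : ∀ (p : {p : V × V // G.Adj p.1 p.2}), 0 < z p.1.1 p.1.2 :=
    fun p => (hz01 _ _ p.2).1
  -- key per-vertex inequality
  have hW : ∀ t i, 0 ≤ ((A (t+2) i : ℝ) - A t i) *
      ∑ j ∈ G.neighborFinset i, z i j * (A (t+1) j : ℝ) := by
    intro t i
    rcases lt_or_gt_of_ne (hSne (t+1) i) with hneg | hpos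
    · have hA2 : A (t+2) i = -1 := by
        rw [hdyn (t+1) i, if_neg (by omega)]
      have hWneg : (∑ j ∈ G.neighborFinset i, z i j * (A (t+1) j : ℝ)) < 0 := by
        have h0 := sign_lemma G d hd hdeg z hz01 hlegal i (fun j => -(A (t+1) j))
          (fun j => by rcases hApm (t+1) j with h | h <;> simp [h])
          (by rw [Finset.sum_neg_distrib]; omega)
        have h1 : (∑ j ∈ G.neighborFinset i, z i j * ((-(A (t+1) j) : ℤ) : ℝ))
            = -∑ j ∈ G.neighborFinset i, z i j * (A (t+1) j : ℝ) := by
          rw [← Finset.sum_neg_distrib]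
          apply Finset.sum_congr rfl
          intro j _
          push_cast
          ring
        rw [h1] at h0
        linarith
      have hle : ((A (t+2) i : ℝ) - A t i) ≤ 0 := by
        rw [hA2]
        rcases hApm t i with h | h <;> simp [h]
      nlinarith [hle, hWneg]
    · have hA2 : A (t+2) i = 1 := by
        rw [hdyn (t+1) i, if_pos hpos]
      have hWpos : 0 < ∑ j ∈ G.neighborFinset i, z i j * (A (t+1) j : ℝ) :=
        sign_lemma G d hd hdeg z hz01 hlegal i (A (t+1)) (hApm (t+1)) hpos
      have hle : 0 ≤ ((A (t+2) i : ℝ) - A t i) := by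
        rw [hA2]
        rcases hApm t i with h | h <;> simp [h]
      exact mul_nonneg hle (le_of_lt hWpos)
  -- summability helpers
  have hsq4 : ∀ (s u : ℕ) (i j : V), ((A s i : ℝ) - A u j)^2 ≤ 4 := by
    intro s u i j
    rcases hApm s i with h | h <;> rcases hApm u j with h' | h' <;> rw [h, h'] <;> norm_num
  have hsummaster : ∀ (F : {p : V × V // G.Adj p.1 p.2} → ℝ), (∀ p, 0 ≤ F p) →
      (∀ p, F p ≤ 4 * z p.1.1 p.1.2) → Summable F :=
    fun F h1 h2 => Summable.of_nonneg_of_le h1 h2 (hzsum.mul_left 4)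
  have hsumf : ∀ t, Summable (fun p : {p : V × V // G.Adj p.1 p.2} =>
      z p.1.1 p.1.2 * ((A (t+1) p.1.1 : ℝ) - A t p.1.2)^2) := by
    intro t
    apply hsummaster
    · intro p; exact mul_nonneg (le_of_lt (hzadj p)) (sq_nonneg _)
    · intro p
      have h1 := hsq4 (t+1) t p.1.1 p.1.2
      nlinarith [hzadj p, sq_nonneg ((A (t+1) p.1.1 : ℝ) - A t p.1.2)]
  have hsumf' : ∀ t, Summable (fun p : {p : V × V // G.Adj p.1 p.2} =>
      z p.1.1 p.1.2 * ((A (t+1) p.1.2 : ℝ) - A t p.1.1)^2) := by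
    intro t
    apply hsummaster
    · intro p; exact mul_nonneg (le_of_lt (hzadj p)) (sq_nonneg _)
    · intro p
      have h1 := hsq4 (t+1) t p.1.2 p.1.1
      nlinarith [hzadj p, sq_nonneg ((A (t+1) p.1.2 : ℝ) - A t p.1.1)]
  -- the swap equivalence
  let eswap : {p : V × V // G.Adj p.1 p.2} ≃ {p : V × V // G.Adj p.1 p.2} :=
    { toFun := fun p => ⟨(p.1.2, p.1.1), p.2.symm⟩
      invFun := fun p => ⟨(p.1.2, p.1.1), p.2.symm⟩
      left_inv := fun p => rfl
      right_inv := fun p => rfl }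
  have hswap : ∀ t, (∑' p : {p : V × V // G.Adj p.1 p.2},
        z p.1.1 p.1.2 * ((A (t+1) p.1.1 : ℝ) - A t p.1.2)^2)
      = ∑' p : {p : V × V // G.Adj p.1 p.2},
        z p.1.1 p.1.2 * ((A (t+1) p.1.2 : ℝ) - A t p.1.1)^2 := by
    intro t
    rw [← eswap.tsum_eq (f := fun p : {p : V × V // G.Adj p.1 p.2} =>
      z p.1.1 p.1.2 * ((A (t+1) p.1.1 : ℝ) - A t p.1.2)^2)]
    apply tsum_congr
    intro p
    show z p.1.2 p.1.1 * ((A (t+1) p.1.2 : ℝ) - A t p.1.1)^2 = _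
    rw [hsym]
  -- the sigma equivalence
  let esig : (Σ i : V, {j // j ∈ G.neighborFinset i}) ≃ {p : V × V // G.Adj p.1 p.2} :=
    { toFun := fun x => ⟨(x.1, x.2.1), by
        have := x.2.2; rwa [SimpleGraph.mem_neighborFinset] at this⟩
      invFun := fun p => ⟨p.1.1, ⟨p.1.2, (SimpleGraph.mem_neighborFinset _ _ _).mpr p.2⟩⟩
      left_inv := fun x => rfl
      right_inv := fun p => rfl }
  -- the main step
  apply antitone_nat_of_succ_le
  intro t
  have key : (∑' p : {p : V × V // G.Adj p.1 p.2},
        z p.1.1 p.1.2 * ((A (t+1+1) p.1.1 : ℝ) - A (t+1) p.1.2)^2)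
      ≤ ∑' p : {p : V × V // G.Adj p.1 p.2},
        z p.1.1 p.1.2 * ((A (t+1) p.1.1 : ℝ) - A t p.1.2)^2 := by
    rw [hswap t]
    set h : {p : V × V // G.Adj p.1 p.2} → ℝ := fun p =>
      z p.1.1 p.1.2 * ((A (t+1) p.1.2 : ℝ) - A t p.1.1)^2
      - z p.1.1 p.1.2 * ((A (t+1+1) p.1.1 : ℝ) - A (t+1) p.1.2)^2 with hh
    have hhs : Summable h := (hsumf' t).sub (hsumf (t+1))
    have hpt : ∀ p : {p : V × V // G.Adj p.1 p.2},
        h p = ((A (t+2) p.1.1 : ℝ) - A t p.1.1) * (z p.1.1 p.1.2 * (A (t+1) p.1.2 : ℝ)) * 2 := by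
      intro p
      have h1 := pm_sq (hApm t p.1.1)
      have h2 := pm_sq (hApm (t+2) p.1.1)
      rw [hh]
      show _ - _ = _
      linear_combination z p.1.1 p.1.2 * h1 - z p.1.1 p.1.2 * h2
    have hnn : 0 ≤ ∑' p, h p := by
      rw [← esig.tsum_eq (f := h)]
      have hhsig : Summable (h ∘ esig) := esig.summable_iff.mpr hhs
      rw [show (fun c : (Σ i : V, {j // j ∈ G.neighborFinset i}) => h (esig c)) = h ∘ esig
        from rfl, Summable.tsum_sigma hhsig]
      apply tsum_nonneg
      intro i
      have hin : (∑' j : {j // j ∈ G.neighborFinset i}, (h ∘ esig) ⟨i, j⟩)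
          = ∑ j ∈ G.neighborFinset i,
            ((A (t+2) i : ℝ) - A t i) * (z i j * (A (t+1) j : ℝ)) * 2 := by
        rw [← Finset.tsum_subtype (G.neighborFinset i)
          (fun j => ((A (t+2) i : ℝ) - A t i) * (z i j * (A (t+1) j : ℝ)) * 2)]
        apply tsum_congr
        intro j
        rw [Function.comp_apply, hpt]
        rfl
      rw [hin]
      rw [← Finset.sum_mul, ← Finset.mul_sum]
      have := hW t i
      nlinarith [this]
    have hsub := Summable.tsum_sub (hsumf' t) (hsumf (t+1))
    rw [← hh] at hsub
    rw [hsub] at hnn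
    linarith
  have h14 : (0:ℝ) ≤ 1/4 := by norm_num
  exact mul_le_mul_of_nonneg_left key h14
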